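/- Let (m,n) be a coprime pair of positive integers and let R be the rank set of an (m,n)-Dyck path. Then the rank complement 𝔠(R) = { (max R) − r : r ∈ R } is also the rank set of an (m,n)-Dyck path; conversely, if 𝔠(R) is the rank set of an (m,n)-Dyck path then so is R. -/

import Mathlib

/-- The list of ranks of the lattice points visited by a path (excluding the final
point), starting from rank `r`.  A `true` entry is a north (`u`) step, which adds `m`
to the rank; a `false` entry is an east (`d`) step, which subtracts `n`. -/
def rankWalk (m n : ℤ) : List Bool → ℤ → List ℤ
  | [], _ => []
  | b :: bs, r => r :: rankWalk m n bs (r + if b then m else -n)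

/-- An `(m,n)`-path: a word of `n` north steps (`true`) and `m` east steps (`false`). -/
def IsPathWord (m n : ℕ) (P : List Bool) : Prop :=
  P.length = m + n ∧ P.count true = n

/-- An `(m,n)`-Dyck path: an `(m,n)`-path all of whose ranks are nonnegative. -/
def IsDyckWord (m n : ℕ) (P : List Bool) : Prop :=
  IsPathWord m n P ∧ ∀ r ∈ rankWalk (m : ℤ) (n : ℤ) P 0, 0 ≤ r

/-- The rank set of a path: the ranks of its `m+n` lattice points other than the endpoint. -/
def rankSet (m n : ℕ) (P : List Bool) : Finset ℤ :=
  (rankWalk (m : ℤ) (n : ℤ) P 0).toFinset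

/-- `R` is the rank set of some `(m,n)`-path. -/
def IsRankSet (m n : ℕ) (R : Finset ℤ) : Prop :=
  ∃ P : List Bool, IsPathWord m n P ∧ rankSet m n P = R

/-- `R` is the rank set of some `(m,n)`-Dyck path. -/
def IsDyckRankSet (m n : ℕ) (R : Finset ℤ) : Prop :=
  ∃ P : List Bool, IsDyckWord m n P ∧ rankSet m n P = R

/-- The rank complement `𝔠(R) = (max R) - R`. -/
def rankCompl (R : Finset ℤ) : Finset ℤ :=
  R.image (fun r => WithBot.unbotD 0 R.max - r)

namespace DyckAux

/-- Weighted sum of a step word. -/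
def wsum (m n : ℤ) (P : List Bool) : ℤ := (P.map (fun b => if b then m else -n)).sum

lemma wsum_nil (m n : ℤ) : wsum m n [] = 0 := rfl

lemma wsum_cons (m n : ℤ) (b : Bool) (P : List Bool) :
    wsum m n (b :: P) = (if b then m else -n) + wsum m n P := by
  simp [wsum]

lemma wsum_append (m n : ℤ) (A B : List Bool) :
    wsum m n (A ++ B) = wsum m n A + wsum m n B := by
  simp [wsum]

lemma wsum_perm (m n : ℤ) {A B : List Bool} (h : A.Perm B) : wsum m n A = wsum m n B :=
  (h.map _).sum_eq

lemma rankWalk_eq (m n : ℤ) (P : List Bool) (r : ℤ) :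
    rankWalk m n P r = (List.range P.length).map (fun i => r + wsum m n (P.take i)) := by
  induction P generalizing r with
  | nil => simp [rankWalk]
  | cons b bs ih =>
      rw [List.length_cons, List.range_succ_eq_map, List.map_cons, List.map_map]
      show rankWalk m n (b :: bs) r = (r + wsum m n []) :: _
      rw [wsum_nil, add_zero]
      show r :: rankWalk m n bs (r + if b then m else -n) = _
      rw [ih]
      congr 1
      apply List.map_congr_left
      intro i _
      simp only [Function.comp_apply, List.take_succ_cons, wsum_cons]
      ring

lemma count_false_add_count_true (P : List Bool) :
    P.count false + P.count true = P.length := by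
  induction P with
  | nil => rfl
  | cons b bs ih =>
      cases b <;> simp [List.count_cons] <;> omega

lemma wsum_eq_count (m n : ℤ) (P : List Bool) :
    wsum m n P = P.count true * m - P.count false * n := by
  induction P with
  | nil => simp [wsum_nil]
  | cons b bs ih =>
      cases b <;> simp [wsum_cons, ih, List.count_cons] <;> ring

/-- wsum of a path word is zero. -/
lemma wsum_pathWord {m n : ℕ} {P : List Bool} (h : IsPathWord m n P) :
    wsum (m : ℤ) (n : ℤ) P = 0 := by
  obtain ⟨hlen, hcnt⟩ := h
  have hf : P.count false = m := by
    have := count_false_add_count_true P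
    omega
  rw [wsum_eq_count, hcnt, hf]
  push_cast
  ring

lemma mem_rankSet_iff {m n : ℕ} {P : List Bool} (hL : 0 < P.length)
    (h0 : wsum (m : ℤ) (n : ℤ) P = 0) (x : ℤ) :
    x ∈ rankSet m n P ↔ ∃ i ≤ P.length, wsum (m : ℤ) (n : ℤ) (P.take i) = x := by
  rw [rankSet, List.mem_toFinset, rankWalk_eq, List.mem_map]
  simp only [List.mem_range, zero_add]
  constructor
  · rintro ⟨i, hi, rfl⟩
    exact ⟨i, hi.le, rfl⟩
  · rintro ⟨i, hi, rfl⟩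
    rcases lt_or_eq_of_le hi with hi' | rfl
    · exact ⟨i, hi', rfl⟩
    · refine ⟨0, hL, ?_⟩
      rw [List.take_length, h0]
      rfl

lemma wsum_take_reverse {m n : ℕ} {P : List Bool}
    (h0 : wsum (m : ℤ) (n : ℤ) P = 0) (i : ℕ) :
    wsum (m : ℤ) (n : ℤ) (P.reverse.take i) =
      -wsum (m : ℤ) (n : ℤ) (P.take (P.length - i)) := by
  rw [List.take_reverse]
  have hrev : wsum (m : ℤ) (n : ℤ) ((P.drop (P.length - i)).reverse)
      = wsum (m : ℤ) (n : ℤ) (P.drop (P.length - i)) :=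
    wsum_perm _ _ (List.reverse_perm _)
  rw [hrev]
  have := wsum_append (m : ℤ) (n : ℤ) (P.take (P.length - i)) (P.drop (P.length - i))
  rw [List.take_append_drop] at this
  omega

lemma mem_rankSet_reverse {m n : ℕ} {P : List Bool} (hL : 0 < P.length)
    (h0 : wsum (m : ℤ) (n : ℤ) P = 0) (x : ℤ) :
    x ∈ rankSet m n P.reverse ↔ -x ∈ rankSet m n P := by
  have hL' : 0 < P.reverse.length := by simpa using hL
  have h0' : wsum (m : ℤ) (n : ℤ) P.reverse = 0 :=
    (wsum_perm _ _ (List.reverse_perm _)).trans h0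
  rw [mem_rankSet_iff hL' h0', mem_rankSet_iff hL h0]
  simp only [List.length_reverse]
  constructor
  · rintro ⟨i, hi, rfl⟩
    refine ⟨P.length - i, Nat.sub_le _ _, ?_⟩
    rw [wsum_take_reverse h0]
    ring
  · rintro ⟨i, hi, hx⟩
    refine ⟨P.length - i, Nat.sub_le _ _, ?_⟩
    rw [wsum_take_reverse h0]
    have : P.length - (P.length - i) = i := by omega
    rw [this, hx]
    ring

lemma mem_rankSet_rotate {m n : ℕ} {P : List Bool} {j : ℕ} (hj : j ≤ P.length)
    (hL : 0 < P.length) (h0 : wsum (m : ℤ) (n : ℤ) P = 0) (x : ℤ) :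
    x ∈ rankSet m n (P.rotate j) ↔
      x + wsum (m : ℤ) (n : ℤ) (P.take j) ∈ rankSet m n P := by
  set c := wsum (m : ℤ) (n : ℤ) (P.take j) with hc
  have hrot : P.rotate j = P.drop j ++ P.take j := List.rotate_eq_drop_append_take hj
  have hlenrot : (P.rotate j).length = P.length := List.length_rotate _ _
  have hL' : 0 < (P.rotate j).length := by omega
  have h0' : wsum (m : ℤ) (n : ℤ) (P.rotate j) = 0 :=
    (wsum_perm _ _ (List.rotate_perm _ _)).trans h0
  have hdrop : wsum (m : ℤ) (n : ℤ) (P.drop j) = -c := by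
    have := wsum_append (m : ℤ) (n : ℤ) (P.take j) (P.drop j)
    rw [List.take_append_drop] at this
    omega
  have hdl : (P.drop j).length = P.length - j := List.length_drop
  -- key computation
  have key : ∀ i ≤ P.length, ∃ i' ≤ P.length,
      wsum (m : ℤ) (n : ℤ) ((P.rotate j).take i)
        = wsum (m : ℤ) (n : ℤ) (P.take i') - c := by
    intro i hi
    rw [hrot]
    by_cases hcase : i ≤ P.length - j
    · refine ⟨j + i, by omega, ?_⟩
      have h1 : (P.drop j ++ P.take j).take i = (P.drop j).take i := by
        rw [List.take_append_of_le_length (by omega)]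
      have h2 : P.take (j + i) = P.take j ++ (P.drop j).take i := List.take_add
      rw [h1, h2, wsum_append]
      ring
    · obtain ⟨k, hk1, hk2⟩ : ∃ k, i = (P.drop j).length + k ∧ k ≤ j :=
        ⟨i - (P.length - j), by omega, by omega⟩
      refine ⟨k, by omega, ?_⟩
      rw [hk1, List.take_length_add_append, wsum_append, hdrop]
      have h2 : (P.take j).take k = P.take k := by
        rw [List.take_take, inf_eq_left.mpr hk2]
      rw [h2]
      ring
  rw [mem_rankSet_iff hL' h0', mem_rankSet_iff hL h0]
  constructor
  · rintro ⟨i, hi, rfl⟩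
    rw [hlenrot] at hi
    obtain ⟨i', hi', heq⟩ := key i hi
    exact ⟨i', hi', by rw [heq]; ring⟩
  · rintro ⟨i', hi', hx⟩
    by_cases hcase : j ≤ i'
    · refine ⟨i' - j, by omega, ?_⟩
      have h1 : (P.rotate j).take (i' - j) = (P.drop j).take (i' - j) := by
        rw [hrot, List.take_append_of_le_length (by omega)]
      have h2 : P.take i' = P.take j ++ (P.drop j).take (i' - j) := by
        conv_lhs => rw [show i' = j + (i' - j) by omega]
        rw [List.take_add]
      rw [h1]
      have := wsum_append (m : ℤ) (n : ℤ) (P.take j) ((P.drop j).take (i' - j))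
      rw [← h2, hx] at this
      omega
    · refine ⟨i' + (P.length - j), by omega, ?_⟩
      have h1 : (P.rotate j).take (i' + (P.length - j))
          = P.drop j ++ (P.take j).take i' := by
        rw [hrot]
        conv_lhs => rw [show i' + (P.length - j) = (P.drop j).length + i' by omega]
        rw [List.take_length_add_append]
      have h2 : (P.take j).take i' = P.take i' := by
        rw [List.take_take, inf_eq_left.mpr (by omega)]
      rw [h1, h2, wsum_append, hdrop, hx]
      ring

/-- Forward direction: the rank complement of a Dyck rank set is a Dyck rank set. -/
lemma fwd (m n : ℕ) (hm : 0 < m) (hn : 0 < n) (R : Finset ℤ)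
    (h0 : (0 : ℤ) ∈ R) (hpos : ∀ r ∈ R, 0 ≤ r) :
    IsDyckRankSet m n R → IsDyckRankSet m n (rankCompl R) := by
  rintro ⟨P, ⟨hpath, _⟩, hRS⟩
  have hne : R.Nonempty := ⟨0, h0⟩
  set M : ℤ := R.max' hne with hM
  have hcompl : rankCompl R = R.image (fun r => M - r) := by
    rw [rankCompl, ← Finset.coe_max' hne, WithBot.unbotD_coe]
  have hlen : P.length = m + n := hpath.1
  have hL : 0 < P.length := by omega
  have hw0 : wsum (m : ℤ) (n : ℤ) P = 0 := wsum_pathWord hpath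
  -- find j with wsum (take j P) = M
  have hMR : M ∈ R := R.max'_mem hne
  rw [← hRS, mem_rankSet_iff hL hw0] at hMR
  obtain ⟨j, hj, hjM⟩ := hMR
  -- the candidate path
  set Q : List Bool := (P.rotate j).reverse with hQ
  have hperm : Q.Perm P := (List.reverse_perm _).trans (List.rotate_perm _ _)
  have hpathQ : IsPathWord m n Q := by
    constructor
    · rw [hperm.length_eq, hlen]
    · rw [hperm.count_eq, hpath.2]
  have hLrot : 0 < (P.rotate j).length := by rw [List.length_rotate]; omega
  have h0rot : wsum (m : ℤ) (n : ℤ) (P.rotate j) = 0 :=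
    (wsum_perm _ _ (List.rotate_perm _ _)).trans hw0
  -- rank set of Q is the complement
  have hsetQ : rankSet m n Q = rankCompl R := by
    rw [hcompl]
    ext x
    rw [hQ, mem_rankSet_reverse hLrot h0rot, mem_rankSet_rotate hj hL hw0, hjM,
      hRS, Finset.mem_image]
    constructor
    · intro h
      exact ⟨-x + M, h, by ring⟩
    · rintro ⟨r, hr, rfl⟩
      have : -(M - r) + M = r := by ring
      rw [this]
      exact hr
  refine ⟨Q, ⟨hpathQ, ?_⟩, hsetQ⟩
  intro r hr
  have : r ∈ rankSet m n Q := List.mem_toFinset.mpr hr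
  rw [hsetQ, hcompl, Finset.mem_image] at this
  obtain ⟨s, hs, rfl⟩ := this
  have : s ≤ M := Finset.le_max' R s hs
  omega

end DyckAux

/-- For a coprime pair `(m,n)` of positive integers and a set `R` of
`m + n` nonnegative integers containing `0`: if `R` is the rank set of an `(m,n)`-Dyck
path then so is the rank complement `𝔠(R) = (max R) - R`, and conversely. -/
theorem dyck_rank_set_compl (m n : ℕ) (hm : 0 < m) (hn : 0 < n)
    (hcop : Nat.Coprime m n) (R : Finset ℤ) (hcard : R.card = m + n)
    (h0 : (0 : ℤ) ∈ R) (hpos : ∀ r ∈ R, 0 ≤ r) :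
    IsDyckRankSet m n R ↔ IsDyckRankSet m n (rankCompl R) := by
  have hne : R.Nonempty := ⟨0, h0⟩
  set M : ℤ := R.max' hne with hM
  have hcompl : rankCompl R = R.image (fun r => M - r) := by
    rw [rankCompl, ← Finset.coe_max' hne, WithBot.unbotD_coe]
  constructor
  · exact DyckAux.fwd m n hm hn R h0 hpos
  · intro h
    -- apply fwd to rankCompl R
    have hMR : M ∈ R := R.max'_mem hne
    have h0' : (0 : ℤ) ∈ rankCompl R := by
      rw [hcompl, Finset.mem_image]
      exact ⟨M, hMR, by ring⟩
    have hpos' : ∀ r ∈ rankCompl R, 0 ≤ r := by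
      rw [hcompl]
      rintro r hr
      rw [Finset.mem_image] at hr
      obtain ⟨s, hs, rfl⟩ := hr
      have := Finset.le_max' R s hs
      omega
    have h2 := DyckAux.fwd m n hm hn (rankCompl R) h0' hpos' h
    -- rankCompl (rankCompl R) = R
    have hne' : (rankCompl R).Nonempty := ⟨0, h0'⟩
    have hmax' : (rankCompl R).max' hne' = M := by
      apply le_antisymm
      · apply Finset.max'_le
        intro y hy
        rw [hcompl, Finset.mem_image] at hy
        obtain ⟨s, hs, rfl⟩ := hy
        have := hpos s hs
        omega
      · apply Finset.le_max'
        rw [hcompl, Finset.mem_image]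
        exact ⟨0, h0, by ring⟩
    have hcc : rankCompl (rankCompl R) = R := by
      rw [rankCompl, ← Finset.coe_max' hne', WithBot.unbotD_coe, hmax', hcompl,
        Finset.image_image]
      have : (fun r => M - r) ∘ (fun r => M - r) = id := by
        funext r; simp
      rw [this, Finset.image_id]
    rwa [hcc] at h2
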